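/- Let a, b, c, d, e ∈ K with ad = bc, and define π on K[x,y] by π f = Q_0·∂f + R_0·f where Q_0 = axy + (c+e)x + (b-e)y + d and R_0 = b - c - e. Then π satisfies the Hecke relation π² = (b - c)·π + e(e + c - b)·Id. -/

import Mathlib

open MvPolynomial

/-- The automorphism of `K[x,y]` swapping the two variables. -/
noncomputable def s2 {K : Type*} [Field K] :
    MvPolynomial (Fin 2) K →ₐ[K] MvPolynomial (Fin 2) K :=
  rename (Equiv.swap 0 1)

/-- With `ad = bc`, the operator `π f = Q_0·∂f + R_0·f`, where
`Q_0 = axy + (c+e)x + (b-e)y + d` and `R_0 = b - c - e`, satisfies the Hecke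
relation `π² = (b - c)·π + e(e + c - b)·Id`. -/
theorem hecke_relation {K : Type*} [Field K]
    (a b c d e : K) (habcd : a * d = b * c)
    (f Df Dg : MvPolynomial (Fin 2) K)
    (hDf : (X 0 - X 1) * Df = f - s2 f)
    (hDg : (X 0 - X 1) * Dg
      = ((C a * X 0 * X 1 + C (c + e) * X 0 + C (b - e) * X 1 + C d) * Df
          + C (b - c - e) * f)
        - s2 ((C a * X 0 * X 1 + C (c + e) * X 0 + C (b - e) * X 1 + C d) * Df
          + C (b - c - e) * f)) :
    (C a * X 0 * X 1 + C (c + e) * X 0 + C (b - e) * X 1 + C d) * Dg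
        + C (b - c - e)
          * ((C a * X 0 * X 1 + C (c + e) * X 0 + C (b - e) * X 1 + C d) * Df
            + C (b - c - e) * f)
      = C (b - c)
          * ((C a * X 0 * X 1 + C (c + e) * X 0 + C (b - e) * X 1 + C d) * Df
            + C (b - c - e) * f)
        + C (e * (e + c - b)) * f := by

  have hx : s2 (X 0 : MvPolynomial (Fin 2) K) = X 1 := by
    simp [s2, rename_X]
  have hy : s2 (X 1 : MvPolynomial (Fin 2) K) = X 0 := by
    simp [s2, rename_X]
  have hss : ∀ g : MvPolynomial (Fin 2) K, s2 (s2 g) = g := by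
    intro g
    simp only [s2, rename_rename]
    rw [show ((Equiv.swap (0:Fin 2) 1) ∘ (Equiv.swap (0:Fin 2) 1)) = id by
      funext i; simp, rename_id, AlgHom.id_apply]
  have hne : (X 0 - X 1 : MvPolynomial (Fin 2) K) ≠ 0 := by
    rw [sub_ne_zero]
    exact fun h => by simpa using (MvPolynomial.X_injective h : (0:Fin 2) = 1)
  have hsDf : s2 Df = Df := by
    have h1 := congrArg s2 hDf
    rw [map_mul, map_sub, map_sub, hx, hy, hss] at h1
    apply mul_left_cancel₀ hne
    rw [hDf]
    linear_combination -h1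
  have hsC : ∀ u : K, s2 (C u : MvPolynomial (Fin 2) K) = C u := by
    intro u; simp [s2]
  have hDg2 : (X 0 - X 1) * Dg = (X 0 - X 1) * (C e * Df) := by
    rw [hDg]
    simp only [map_add, map_mul, map_sub, hsC, hx, hy, hsDf, C_add, C_sub]
    linear_combination ((C c + C e - C b : MvPolynomial (Fin 2) K)) * hDf
  have hDgDf : Dg = C e * Df := mul_left_cancel₀ hne hDg2
  rw [hDgDf]
  simp only [C_add, C_sub, C_mul]
  ring
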